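/- Let L be the Laplacian matrix of a connected weighted graph on a finite vertex set V, let Q be a nonempty proper subset of V, and let A = L_Q be the grounded Laplacian (the principal submatrix of L with rows and columns in Q deleted). Then for every diagonal matrix M indexed by V \ Q with nonnegative diagonal entries, every vertex u ∈ V \ Q, and every real number w > 0: trace(A^{-1}) - trace((A + w·e_u e_uᵀ)^{-1}) ≥ trace((A + M)^{-1}) - trace((A + M + w·e_u e_uᵀ)^{-1}), where e_u is the standard basis vector of index u. (This expresses that the effective resistance R_Q(S) = trace(L(S)_Q^{-1}) is a supermodular function of the set S of added edges incident to Q: for S ⊆ T ⊆ E_Q and e ∉ T, R_Q(S) - R_Q(S∪{e}) ≥ R_Q(T) - R_Q(T∪{e}).) -/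

import Mathlib

open Matrix

/-- The simple graph whose adjacency relation is `i ≠ j ∧ W i j > 0`. -/
def weightedAdjGraph {V : Type*} (W : V → V → ℝ) (hsymm : ∀ i j, W i j = W j i) :
    SimpleGraph V where
  Adj i j := i ≠ j ∧ 0 < W i j
  symm := by
    refine ⟨?_⟩
    intro i j h
    exact ⟨h.1.symm, by rw [← hsymm i j]; exact h.2⟩
  loopless := by refine ⟨?_⟩; intro i h; exact h.1 rfl

/-- The Laplacian matrix of a weighted graph: `L i i = ∑ j, W i j` and
`L i j = -W i j` for `i ≠ j`. -/
def laplacian {V : Type*} [Fintype V] [DecidableEq V] (W : V → V → ℝ) : Matrix V V ℝ :=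
  Matrix.of fun i j => if i = j then ∑ k, W i k else -W i j

/-- The grounded Laplacian `L_Q`: the principal submatrix of `L` indexed by `V \ Q`. -/
def grounded {V : Type*} (L : Matrix V V ℝ) (Q : Finset V) :
    Matrix {i // i ∉ Q} {i // i ∉ Q} ℝ :=
  L.submatrix Subtype.val Subtype.val


/-- The inverse of a positive definite Z-matrix (an M-matrix) has nonnegative entries. -/
lemma minv_entry_nonneg {n : Type*} [Fintype n] [DecidableEq n]
    {A : Matrix n n ℝ} (hA : A.PosDef) (hZ : ∀ i j, i ≠ j → A i j ≤ 0)
    (i j : n) : 0 ≤ A⁻¹ i j := by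
  have hdet : IsUnit A.det := (isUnit_iff_isUnit_det A).mp hA.isUnit
  set x : n → ℝ := fun k => A⁻¹ k j with hxdef
  have hAx : A *ᵥ x = fun k => (1 : Matrix n n ℝ) k j := by
    funext k
    simp only [mulVec, dotProduct, hxdef]
    rw [show (1 : Matrix n n ℝ) k j = (A * A⁻¹) k j by rw [A.mul_nonsing_inv hdet]]
    simp [Matrix.mul_apply]
  by_contra hneg
  set y : n → ℝ := fun k => min (x k) 0 with hydef
  set z : n → ℝ := fun k => max (x k) 0 with hzdef
  have hyz : y + z = x := by
    funext k; simp [hydef, hzdef, min_add_max]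
  have hy_le : ∀ k, y k ≤ 0 := fun k => min_le_right _ _
  have hz_ge : ∀ k, 0 ≤ z k := fun k => le_max_right _ _
  have hmul0 : ∀ k, y k * z k = 0 := by
    intro k
    rcases le_or_gt (x k) 0 with h | h
    · simp [hzdef, max_eq_right h]
    · simp [hydef, min_eq_right h.le]
  have hy0 : y ≠ 0 := by
    intro h
    apply hneg
    have := congrFun h i
    simp only [hydef, Pi.zero_apply] at this
    by_contra hlt
    push_neg at hlt
    rw [min_eq_left hlt.le] at this
    exact absurd this hlt.ne
  have hS_pos : 0 < y ⬝ᵥ (A *ᵥ x) := by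
    have h1 : y ⬝ᵥ (A *ᵥ x) = y ⬝ᵥ (A *ᵥ y) + y ⬝ᵥ (A *ᵥ z) := by
      rw [← hyz, mulVec_add, dotProduct_add]
    have h2 : 0 < y ⬝ᵥ (A *ᵥ y) := by
      have := hA.dotProduct_mulVec_pos hy0
      rwa [star_trivial] at this
    have h3 : 0 ≤ y ⬝ᵥ (A *ᵥ z) := by
      simp only [dotProduct, mulVec, Finset.mul_sum]
      refine Finset.sum_nonneg fun k _ => Finset.sum_nonneg fun l _ => ?_
      rcases eq_or_ne k l with h | h
      · subst h
        have : y k * (A k k * z k) = (y k * z k) * A k k := by ring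
        rw [this, hmul0 k, zero_mul]
      · have : y k * (A k l * z l) = (y k * A k l) * z l := by ring
        rw [this]
        exact mul_nonneg (mul_nonneg_of_nonpos_of_nonpos (hy_le k) (hZ k l h)) (hz_ge l)
    linarith
  have hS_nonpos : y ⬝ᵥ (A *ᵥ x) ≤ 0 := by
    rw [hAx]
    simp only [dotProduct, one_apply]
    have : ∀ k, y k * (if k = j then (1:ℝ) else 0) ≤ 0 := by
      intro k
      split
      · simpa using hy_le k
      · simp
    exact Finset.sum_nonpos fun k _ => this k
  linarith

lemma minv_sub_inv {n : Type*} [Fintype n] [DecidableEq n] {A B : Matrix n n ℝ}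
    (hA : IsUnit A.det) (hB : IsUnit B.det) :
    A⁻¹ - B⁻¹ = A⁻¹ * (B - A) * B⁻¹ := by
  rw [Matrix.mul_sub, Matrix.sub_mul, Matrix.mul_assoc, B.mul_nonsing_inv hB,
    Matrix.mul_one, A.nonsing_inv_mul hA, Matrix.one_mul]

lemma zfact {n : Type*} [Fintype n] [DecidableEq n] {A : Matrix n n ℝ} (d : n → ℝ)
    (hZ : ∀ i j, i ≠ j → A i j ≤ 0) :
    ∀ i j, i ≠ j → (A + Matrix.diagonal d) i j ≤ 0 := by
  intro i j h
  simpa [Matrix.diagonal_apply_ne _ h] using hZ i j h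

lemma pdfact {n : Type*} [Fintype n] [DecidableEq n] {A : Matrix n n ℝ} {d : n → ℝ}
    (hA : A.PosDef) (hd : ∀ i, 0 ≤ d i) : (A + Matrix.diagonal d).PosDef :=
  hA.add_posSemidef (Matrix.PosSemidef.diagonal hd)

/-- Entrywise monotonicity: adding a nonnegative diagonal decreases the inverse entrywise. -/
lemma minv_add_diag_le {n : Type*} [Fintype n] [DecidableEq n]
    {A : Matrix n n ℝ} (hA : A.PosDef) (hZ : ∀ i j, i ≠ j → A i j ≤ 0)
    {d : n → ℝ} (hd : ∀ i, 0 ≤ d i) (i j : n) :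
    (A + Matrix.diagonal d)⁻¹ i j ≤ A⁻¹ i j := by
  have hB : (A + Matrix.diagonal d).PosDef := pdfact hA hd
  have hdetA : IsUnit A.det := (isUnit_iff_isUnit_det A).mp hA.isUnit
  have hdetB : IsUnit (A + Matrix.diagonal d).det :=
    (isUnit_iff_isUnit_det _).mp hB.isUnit
  have hid : A⁻¹ - (A + Matrix.diagonal d)⁻¹ =
      A⁻¹ * Matrix.diagonal d * (A + Matrix.diagonal d)⁻¹ := by
    have := minv_sub_inv hdetA hdetB
    simpa using this
  have key : 0 ≤ (A⁻¹ * Matrix.diagonal d * (A + Matrix.diagonal d)⁻¹) i j := by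
    rw [Matrix.mul_apply]
    refine Finset.sum_nonneg fun k _ => ?_
    rw [Matrix.mul_diagonal]
    exact mul_nonneg (mul_nonneg (minv_entry_nonneg hA hZ i k) (hd k))
      (minv_entry_nonneg hB (zfact d hZ) k j)
  have := hid ▸ key
  simp only [Matrix.sub_apply] at this
  linarith

lemma trace_sub_inv_eq {n : Type*} [Fintype n] [DecidableEq n]
    {A : Matrix n n ℝ} (hA : A.PosDef) {e : n → ℝ} (he : ∀ i, 0 ≤ e i) :
    (A⁻¹).trace - ((A + Matrix.diagonal e)⁻¹).trace =
      ∑ i, ∑ k, A⁻¹ i k * e k * (A + Matrix.diagonal e)⁻¹ k i := by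
  have hB : (A + Matrix.diagonal e).PosDef := pdfact hA he
  have hdetA : IsUnit A.det := (isUnit_iff_isUnit_det A).mp hA.isUnit
  have hdetB : IsUnit (A + Matrix.diagonal e).det := (isUnit_iff_isUnit_det _).mp hB.isUnit
  have hid : A⁻¹ - (A + Matrix.diagonal e)⁻¹ =
      A⁻¹ * Matrix.diagonal e * (A + Matrix.diagonal e)⁻¹ := by
    have := minv_sub_inv hdetA hdetB
    simpa using this
  rw [← Matrix.trace_sub, hid, Matrix.trace]
  refine Finset.sum_congr rfl fun i _ => ?_
  rw [Matrix.diag_apply, Matrix.mul_apply]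
  refine Finset.sum_congr rfl fun k _ => ?_
  rw [Matrix.mul_diagonal]

/-- Key supermodularity inequality for positive definite Z-matrices. -/
lemma key_supermodular {n : Type*} [Fintype n] [DecidableEq n]
    {A : Matrix n n ℝ} (hA : A.PosDef) (hZ : ∀ i j, i ≠ j → A i j ≤ 0)
    (d e : n → ℝ) (hd : ∀ i, 0 ≤ d i) (he : ∀ i, 0 ≤ e i) :
    ((A + Matrix.diagonal d)⁻¹).trace - ((A + Matrix.diagonal d + Matrix.diagonal e)⁻¹).trace ≤
      (A⁻¹).trace - ((A + Matrix.diagonal e)⁻¹).trace := by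
  have hAd : (A + Matrix.diagonal d).PosDef := pdfact hA hd
  have hAe : (A + Matrix.diagonal e).PosDef := pdfact hA he
  have hZd := zfact d hZ
  have hZe := zfact e hZ
  have hAde : (A + Matrix.diagonal e + Matrix.diagonal d).PosDef := pdfact hAe hd
  have hcomm : A + Matrix.diagonal d + Matrix.diagonal e
      = A + Matrix.diagonal e + Matrix.diagonal d := add_right_comm _ _ _
  rw [trace_sub_inv_eq hA he, trace_sub_inv_eq hAd he]
  refine Finset.sum_le_sum fun i _ => Finset.sum_le_sum fun k _ => ?_
  have h1 : (A + Matrix.diagonal d)⁻¹ i k ≤ A⁻¹ i k := minv_add_diag_le hA hZ hd i k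
  have h1' : 0 ≤ (A + Matrix.diagonal d)⁻¹ i k := minv_entry_nonneg hAd hZd i k
  have h2 : (A + Matrix.diagonal d + Matrix.diagonal e)⁻¹ k i
      ≤ (A + Matrix.diagonal e)⁻¹ k i := by
    rw [hcomm]; exact minv_add_diag_le hAe hZe hd k i
  have h2' : 0 ≤ (A + Matrix.diagonal d + Matrix.diagonal e)⁻¹ k i := by
    rw [hcomm]; exact minv_entry_nonneg hAde (zfact d hZe) k i
  calc (A + Matrix.diagonal d)⁻¹ i k * e k * (A + Matrix.diagonal d + Matrix.diagonal e)⁻¹ k i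
      = ((A + Matrix.diagonal d)⁻¹ i k * (A + Matrix.diagonal d + Matrix.diagonal e)⁻¹ k i)
        * e k := by ring
    _ ≤ (A⁻¹ i k * (A + Matrix.diagonal e)⁻¹ k i) * e k :=
        mul_le_mul_of_nonneg_right (mul_le_mul h1 h2 h2' (le_trans h1' h1)) (he k)
    _ = A⁻¹ i k * e k * (A + Matrix.diagonal e)⁻¹ k i := by ring

lemma grounded_posDef {V : Type*} [Fintype V] [DecidableEq V]
    (W : V → V → ℝ) (hsymm : ∀ i j, W i j = W j i)
    (hdiag : ∀ i, W i i = 0) (hnonneg : ∀ i j, 0 ≤ W i j)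
    (hconn : (weightedAdjGraph W hsymm).Connected)
    (Q : Finset V) (hQ : Q.Nonempty) :
    (grounded (laplacian W) Q).PosDef := by
  classical
  set L : Matrix V V ℝ := laplacian W with hL
  have hLsymm : ∀ v w, L v w = L w v := by
    intro v w
    by_cases h : v = w
    · subst h; rfl
    · simp only [hL, laplacian, Matrix.of_apply, if_neg h, if_neg (Ne.symm h), hsymm]
  rw [posDef_iff_dotProduct_mulVec]
  constructor
  · ext i j
    simp only [grounded, Matrix.conjTranspose_apply, Matrix.submatrix_apply, star_trivial]
    exact hLsymm _ _
  · intro x hx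
    set y : V → ℝ := fun v => if h : v ∉ Q then x ⟨v, h⟩ else 0 with hy
    -- Step 1: the quadratic form equals the full-space quadratic form of y
    have hform : star x ⬝ᵥ (grounded L Q *ᵥ x) = ∑ v, ∑ w, y v * L v w * y w := by
      rw [star_trivial]
      have lhs_eq : x ⬝ᵥ (grounded L Q *ᵥ x)
          = ∑ i : {i // i ∉ Q}, ∑ j : {i // i ∉ Q}, y i.val * L i.val j.val * y j.val := by
        simp only [dotProduct, mulVec, grounded, Matrix.submatrix_apply, Finset.mul_sum]
        refine Finset.sum_congr rfl fun i _ => Finset.sum_congr rfl fun j _ => ?_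
        have hyi : y i.val = x i := by simp [hy, i.prop]
        have hyj : y j.val = x j := by simp [hy, j.prop]
        rw [hyi, hyj]; ring
      rw [lhs_eq]
      have step : ∀ g : V → ℝ, (∀ v ∈ Q, g v = 0) →
          ∑ v, g v = ∑ i : {i // i ∉ Q}, g i.val := by
        intro g hg
        rw [← Finset.sum_subtype Qᶜ (fun a => Finset.mem_compl) g]
        symm
        refine Finset.sum_subset (Finset.subset_univ _) fun v _ hv => ?_
        exact hg v (by simpa using hv)
      rw [step (fun v => ∑ w, y v * L v w * y w) ?side1]
      · refine Finset.sum_congr rfl fun i _ => ?_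
        exact (step (fun w => y i.val * L i.val w * y w)
          (fun w hw => by simp [hy, hw])).symm
      · intro v hv
        refine Finset.sum_eq_zero fun w _ => by simp [hy, hv]
    -- Step 2: 2 * quadratic form = sum of W v w * (y v - y w)^2
    have hterm : ∀ v w, y v * L v w * y w =
        (if w = v then ∑ k, W v k * (y v * y v) else 0) - W v w * (y v * y w) := by
      intro v w
      by_cases h : w = v
      · subst h
        have hLww : L w w = ∑ k, W w k := by simp [hL, laplacian]
        rw [hLww, if_pos rfl, hdiag w, zero_mul, sub_zero,
          show y w * (∑ k, W w k) * y w = (∑ k, W w k) * (y w * y w) by ring,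
          Finset.sum_mul]
      · simp only [hL, laplacian, Matrix.of_apply, if_neg (Ne.symm h), if_neg h]
        ring
    have hS : ∑ v, ∑ w, y v * L v w * y w
        = (∑ v, ∑ w, W v w * (y v * y v)) - ∑ v, ∑ w, W v w * (y v * y w) := by
      rw [← Finset.sum_sub_distrib]
      refine Finset.sum_congr rfl fun v _ => ?_
      rw [← Finset.sum_sub_distrib]
      simp_rw [hterm v]
      rw [Finset.sum_sub_distrib, Finset.sum_ite_eq' Finset.univ v
        (fun _ => ∑ k, W v k * (y v * y v))]
      simp
    have hswap : ∑ v, ∑ w, W v w * (y w * y w) = ∑ v, ∑ w, W v w * (y v * y v) := by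
      rw [Finset.sum_comm]
      exact Finset.sum_congr rfl fun v _ => Finset.sum_congr rfl fun w _ => by rw [hsymm]
    have hT : ∑ v, ∑ w, W v w * (y v - y w)^2
        = 2 * (∑ v, ∑ w, y v * L v w * y w) := by
      have expand : ∀ v w, W v w * (y v - y w)^2
          = W v w * (y v * y v) - 2 * (W v w * (y v * y w)) + W v w * (y w * y w) := by
        intro v w; ring
      simp_rw [expand, Finset.sum_add_distrib, Finset.sum_sub_distrib, ← Finset.mul_sum]
      rw [hS, hswap]
      ring
    have hT_nonneg : 0 ≤ ∑ v, ∑ w, W v w * (y v - y w)^2 :=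
      Finset.sum_nonneg fun v _ => Finset.sum_nonneg fun w _ =>
        mul_nonneg (hnonneg v w) (sq_nonneg _)
    -- Step 3: strict positivity
    rw [hform]
    rcases lt_or_eq_of_le (by linarith : (0:ℝ) ≤ ∑ v, ∑ w, y v * L v w * y w) with h | h
    · exact h
    · exfalso
      have hT0 : ∑ v, ∑ w, W v w * (y v - y w)^2 = 0 := by rw [hT, ← h]; ring
      have hzero : ∀ v w, W v w * (y v - y w)^2 = 0 := by
        intro v w
        have h1 := (Finset.sum_eq_zero_iff_of_nonneg fun v _ =>
          Finset.sum_nonneg fun w _ => mul_nonneg (hnonneg v w) (sq_nonneg _)).mp hT0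
            v (Finset.mem_univ v)
        have h2 := (Finset.sum_eq_zero_iff_of_nonneg fun w _ =>
          mul_nonneg (hnonneg v w) (sq_nonneg _)).mp h1 w (Finset.mem_univ w)
        exact h2
      have hedge : ∀ a b, (weightedAdjGraph W hsymm).Adj a b → y a = y b := by
        intro a b hab
        have := hzero a b
        rcases mul_eq_zero.mp this with h' | h'
        · exact absurd h' hab.2.ne'
        · have := pow_eq_zero_iff (n := 2) (by norm_num) |>.mp h'
          linarith [sub_eq_zero.mp this]
      have hreach : ∀ a b, (weightedAdjGraph W hsymm).Reachable a b → y a = y b := by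
        intro a b hab
        obtain ⟨p⟩ := hab
        induction p with
        | nil => rfl
        | cons h' p ih => exact (hedge _ _ h').trans ih
      obtain ⟨q, hq⟩ := hQ
      have hyq : y q = 0 := by simp [hy, hq]
      have hx0 : x = 0 := by
        funext i
        have : y i.val = y q := hreach _ _ (hconn.preconnected i.val q)
        have hyi : y i.val = x i := by simp [hy, i.prop]
        rw [hyi] at this
        simp [this, hyq]
      exact hx (by simpa using hx0)

/-- Supermodularity of the effective resistance: for the grounded Laplacian `A = L_Q` of a
connected weighted graph, any nonnegative diagonal matrix `M`, any vertex `u ∈ V \ Q`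
and any weight `w > 0`,
`trace(A⁻¹) - trace((A + w·e_u e_uᵀ)⁻¹) ≥ trace((A+M)⁻¹) - trace((A+M+w·e_u e_uᵀ)⁻¹)`. -/
theorem grounded_laplacian_trace_inv_supermodular {V : Type*} [Fintype V] [DecidableEq V]
    (W : V → V → ℝ) (hsymm : ∀ i j, W i j = W j i)
    (hdiag : ∀ i, W i i = 0) (hnonneg : ∀ i j, 0 ≤ W i j)
    (hconn : (weightedAdjGraph W hsymm).Connected)
    (Q : Finset V) (hQ : Q.Nonempty) (hQproper : Q ≠ Finset.univ)
    (M : {i // i ∉ Q} → ℝ) (hM : ∀ i, 0 ≤ M i)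
    (u : {i // i ∉ Q}) (w : ℝ) (hw : 0 < w) :
    ((grounded (laplacian W) Q + Matrix.diagonal M)⁻¹).trace -
        ((grounded (laplacian W) Q + Matrix.diagonal M + Matrix.single u u w)⁻¹).trace ≤
      ((grounded (laplacian W) Q)⁻¹).trace -
        ((grounded (laplacian W) Q + Matrix.single u u w)⁻¹).trace := by
  classical
  set A : Matrix {i // i ∉ Q} {i // i ∉ Q} ℝ := grounded (laplacian W) Q with hAdef
  have hA : A.PosDef := grounded_posDef W hsymm hdiag hnonneg hconn Q hQ
  have hZ : ∀ i j : {i // i ∉ Q}, i ≠ j → A i j ≤ 0 := by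
    intro i j hij
    have hne : (i : V) ≠ (j : V) := Subtype.coe_injective.ne hij
    simp only [hAdef, grounded, Matrix.submatrix_apply, laplacian, Matrix.of_apply, if_neg hne]
    exact neg_nonpos.mpr (hnonneg _ _)
  set e : {i // i ∉ Q} → ℝ := fun i => if i = u then w else 0 with he
  have hstd : Matrix.single u u w = Matrix.diagonal e := by
    ext i j
    simp only [Matrix.single, Matrix.of_apply, Matrix.diagonal_apply, he]
    by_cases h1 : i = u <;> by_cases h2 : j = u <;> by_cases h3 : i = j <;>
      simp_all <;> tauto
  have he_nonneg : ∀ i, 0 ≤ e i := by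
    intro i
    simp only [he]
    split
    · exact hw.le
    · exact le_rfl
  rw [hstd]
  exact key_supermodular hA hZ M e hM he_nonneg
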